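/- Let p ≥ 2 be an integer and let (N_k) be the Newton residuals N_k(z) = 1 - (1-z)/U_k(z)^p with U_0 ≡ 1 and U_{k+1} = ((p-1)U_k + (1-z)/U_k^{p-1})/p. Then for every k ≥ 1 and every z in the closed unit disk with z ∉ {0,1}, |N_k(z)| < |z|^{2^k}; in particular U_k has no zeros and no poles in the closed unit disk. -/

import Mathlib

lemma idA {R : Type*} [CommRing R] (a : R) (n : ℕ) :
    (1 - a) ^ 2 * ∑ j ∈ Finset.range n, ∑ i ∈ Finset.range j, a ^ i
      = a ^ n - 1 + n * (1 - a) := by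
  induction n with
  | zero => simp
  | succ n ih =>
      rw [Finset.sum_range_succ, mul_add, ih]
      have gs := geom_sum_mul a n
      push_cast
      linear_combination - (1 - a) * gs

lemma rho_gt (p : ℕ) (hp : 2 ≤ p) (w : ℂ) (h1 : ‖w‖ ≤ 1) (hne : w ≠ 1) :
    ((p : ℝ) - 1) / p < ‖1 - w / p‖ := by
  have hp0 : (0:ℝ) < p := by positivity
  have hpC : (p : ℂ) ≠ 0 := Nat.cast_ne_zero.2 (by omega)
  have ha : (1 : ℂ) - w / p = ((p : ℂ) - w) / p := by field_simp
  rw [ha, norm_div, Complex.norm_natCast]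
  rw [div_lt_div_iff_of_pos_right hp0]
  have hsq : ‖(p:ℂ) - w‖ ^ 2 = ((p:ℝ) - w.re) ^ 2 + w.im ^ 2 := by
    rw [← Complex.normSq_eq_norm_sq]
    simp [Complex.normSq_apply]
    ring
  have hw2 : w.re ^ 2 + w.im ^ 2 ≤ 1 := by
    have : ‖w‖ ^ 2 ≤ 1 := by nlinarith [norm_nonneg w]
    rw [← Complex.normSq_eq_norm_sq] at this
    simpa [Complex.normSq_apply, sq] using this
  have hx1 : w.re < 1 := by
    rcases lt_or_eq_of_le (show w.re ≤ 1 by nlinarith [sq_nonneg w.im]) with h | h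
    · exact h
    · exfalso
      apply hne
      have him : w.im = 0 := by nlinarith
      exact Complex.ext (by simp [h]) (by simp [him])
  have hnn : (0:ℝ) ≤ ‖(p:ℂ) - w‖ := norm_nonneg _
  nlinarith [sq_nonneg w.im, mul_pos (sub_pos.2 hx1) (show (0:ℝ) < 3 - w.re by nlinarith [sq_nonneg w.im])]

-- core inequality
lemma core (p : ℕ) (hp : 2 ≤ p) (w : ℂ) (h1 : ‖w‖ ≤ 1) (h0 : w ≠ 0) (hne : w ≠ 1) :
    ‖1 - (1 - w) / (1 - w / p) ^ p‖ < ‖w‖ ^ 2 := by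
  have hp0 : (0:ℝ) < p := by positivity
  have hp2 : (2:ℝ) ≤ p := by exact_mod_cast hp
  have hpC : (p : ℂ) ≠ 0 := Nat.cast_ne_zero.2 (by omega)
  set a : ℂ := 1 - w / p with ha
  set ρ : ℝ := ‖a‖ with hρdef
  set ρ₀ : ℝ := ((p:ℝ) - 1) / p with hρ₀def
  have hρ₀pos : 0 < ρ₀ := by
    rw [hρ₀def]; apply div_pos <;> linarith
  have hρ : ρ₀ < ρ := rho_gt p hp w h1 hne
  have hρpos : 0 < ρ := lt_trans hρ₀pos hρ
  have hane : a ≠ 0 := by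
    intro h; rw [h] at hρdef; simp [hρdef] at hρpos
  -- numerator identity
  have hnum : a ^ p - (1 - w) = (w / p) ^ 2 * ∑ j ∈ Finset.range p, ∑ i ∈ Finset.range j, a ^ i := by
    have := idA a p
    have h1a : (1 : ℂ) - a = w / p := by rw [ha]; ring
    rw [h1a] at this
    have : (w / p) ^ 2 * ∑ j ∈ Finset.range p, ∑ i ∈ Finset.range j, a ^ i
        = a ^ p - 1 + p * (w / p) := this
    rw [this]
    have : (p:ℂ) * (w / p) = w := by field_simp
    rw [this]; ring
  -- real sums
  have hT0 : ∑ j ∈ Finset.range p, ∑ i ∈ Finset.range j, ρ₀ ^ i = p ^ 2 * ρ₀ ^ p := by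
    have := idA ρ₀ p
    have h1ρ : (1:ℝ) - ρ₀ = 1 / p := by rw [hρ₀def]; field_simp; ring
    rw [h1ρ] at this
    have hps : ((1:ℝ)/p)^2 ≠ 0 := by positivity
    field_simp at this ⊢
    nlinarith [this]
  -- strict comparison
  have hcomp : ρ₀ ^ p * ∑ j ∈ Finset.range p, ∑ i ∈ Finset.range j, ρ ^ i
      < ρ ^ p * ∑ j ∈ Finset.range p, ∑ i ∈ Finset.range j, ρ₀ ^ i := by
    rw [Finset.mul_sum, Finset.mul_sum]
    apply Finset.sum_lt_sum
    · intro j hj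
      rw [Finset.mul_sum, Finset.mul_sum]
      apply Finset.sum_le_sum
      intro i hi
      have hip : i ≤ p := by
        have := Finset.mem_range.1 hi; have := Finset.mem_range.1 hj; omega
      have e0 : ρ₀ ^ p = ρ₀ ^ (p - i) * ρ₀ ^ i := by
        rw [← pow_add]; congr 1; omega
      have e1 : ρ ^ p = ρ ^ (p - i) * ρ ^ i := by
        rw [← pow_add]; congr 1; omega
      rw [e0, e1]
      have hle : ρ₀ ^ (p - i) ≤ ρ ^ (p - i) :=
        pow_le_pow_left₀ (le_of_lt hρ₀pos) (le_of_lt hρ) _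
      nlinarith [mul_nonneg (mul_nonneg (pow_nonneg (le_of_lt hρ₀pos) i)
        (pow_nonneg (le_of_lt hρpos) i)) (sub_nonneg.2 hle)]
    · refine ⟨1, Finset.mem_range.2 (by omega), ?_⟩
      simp only [Finset.range_one, Finset.sum_singleton, pow_zero, mul_one]
      exact pow_lt_pow_left₀ hρ (le_of_lt hρ₀pos) (by omega)
  have hT : ∑ j ∈ Finset.range p, ∑ i ∈ Finset.range j, ρ ^ i < p ^ 2 * ρ ^ p := by
    rw [hT0] at hcomp
    have e : ρ ^ p * ((p:ℝ) ^ 2 * ρ₀ ^ p) = ρ₀ ^ p * ((p:ℝ) ^ 2 * ρ ^ p) := by ring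
    rw [e] at hcomp
    exact lt_of_mul_lt_mul_left hcomp (le_of_lt (pow_pos hρ₀pos p))
  -- norm bound on the sum
  have hSnorm : ‖∑ j ∈ Finset.range p, ∑ i ∈ Finset.range j, a ^ i‖
      ≤ ∑ j ∈ Finset.range p, ∑ i ∈ Finset.range j, ρ ^ i := by
    refine le_trans (norm_sum_le _ _) (Finset.sum_le_sum fun j _ => ?_)
    refine le_trans (norm_sum_le _ _) (Finset.sum_le_sum fun i _ => ?_)
    rw [norm_pow]
  -- assemble
  have hwpos : 0 < ‖w‖ := norm_pos_iff.2 h0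
  have hnum_lt : ‖a ^ p - (1 - w)‖ < ‖w‖ ^ 2 * ρ ^ p := by
    rw [hnum, norm_mul, norm_pow, norm_div, Complex.norm_natCast]
    calc (‖w‖ / p) ^ 2 * ‖∑ j ∈ Finset.range p, ∑ i ∈ Finset.range j, a ^ i‖
        ≤ (‖w‖ / p) ^ 2 * ∑ j ∈ Finset.range p, ∑ i ∈ Finset.range j, ρ ^ i := by
          apply mul_le_mul_of_nonneg_left hSnorm; positivity
      _ < (‖w‖ / p) ^ 2 * ((p:ℝ) ^ 2 * ρ ^ p) := by
          apply mul_lt_mul_of_pos_left hT; positivity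
      _ = ‖w‖ ^ 2 * ρ ^ p := by field_simp
  have hfrac : (1 : ℂ) - (1 - w) / a ^ p = (a ^ p - (1 - w)) / a ^ p := by
    field_simp
  rw [hfrac, norm_div, norm_pow, ← hρdef, div_lt_iff₀ (by positivity)]
  exact hnum_lt

theorem stmt_13 (p : ℕ) (hp : 2 ≤ p) (U : ℕ → ℂ → ℂ) (N : ℕ → ℂ → ℂ)
    (hU0 : ∀ z, U 0 z = 1)
    (hU : ∀ k z, U (k + 1) z =
      ((p - 1) * U k z + (1 - z) / (U k z) ^ (p - 1)) / p)
    (hN : ∀ k z, N k z = 1 - (1 - z) / (U k z) ^ p) :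
    ∀ k, 1 ≤ k → ∀ z : ℂ, ‖z‖ ≤ 1 → z ≠ 0 → z ≠ 1 →
      ‖N k z‖ < ‖z‖ ^ (2 ^ k) ∧ ∀ j ≤ k, U j z ≠ 0 := by
  intro k hk z hz1 hz0 hzne
  have hpC : (p : ℂ) ≠ 0 := Nat.cast_ne_zero.2 (by omega)
  have hzpos : 0 < ‖z‖ := norm_pos_iff.2 hz0
  -- main invariant
  have inv : ∀ m, U m z ≠ 0 ∧ ‖N m z‖ ≤ ‖z‖ ^ (2 ^ m) ∧
      (1 ≤ m → ‖N m z‖ < ‖z‖ ^ (2 ^ m)) := by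
    intro m
    induction m with
    | zero =>
        refine ⟨by rw [hU0]; exact one_ne_zero, ?_, by omega⟩
        rw [hN 0 z, hU0]
        simp
    | succ m ih =>
        obtain ⟨hUne, hNle, _⟩ := ih
        have hUp : (U m z) ^ p ≠ 0 := pow_ne_zero _ hUne
        have hNm := hN m z
        have h1z : (1 : ℂ) - z = (1 - N m z) * (U m z) ^ p := by
          rw [hNm]; field_simp; ring
        -- N m z ≠ 1
        have hNne1 : N m z ≠ 1 := by
          intro h
          rw [h] at h1z
          simp at h1z
          exact hzne (by linear_combination -h1z)
        -- norm of N m z ≤ 1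
        have hpow1 : ‖z‖ ^ (2 ^ m) ≤ 1 := pow_le_one₀ (norm_nonneg z) hz1
        have hNnorm1 : ‖N m z‖ ≤ 1 := le_trans hNle hpow1
        -- 1 - N/p ≠ 0
        have hfac : (1 : ℂ) - N m z / p ≠ 0 := by
          intro h
          have he : N m z = (p : ℂ) := by
            have : N m z / p = 1 := by linear_combination -h
            field_simp at this
            exact this
          have hp2 : (2:ℝ) ≤ p := by exact_mod_cast hp
          have : ‖N m z‖ = (p:ℝ) := by rw [he, Complex.norm_natCast]
          linarith
        -- recurrence for U
        have hUrec : U (m + 1) z = U m z * (1 - N m z / p) := by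
          rw [hU m z, h1z]
          have hsplit : (U m z) ^ p = U m z * (U m z) ^ (p - 1) := by
            rw [← pow_succ']; congr 1; omega
          rw [hsplit]
          have hUp1 : (U m z) ^ (p - 1) ≠ 0 := pow_ne_zero _ hUne
          field_simp
          ring
        have hU1ne : U (m + 1) z ≠ 0 := by
          rw [hUrec]; exact mul_ne_zero hUne hfac
        -- recurrence for N
        have hNrec : N (m + 1) z = 1 - (1 - N m z) / (1 - N m z / p) ^ p := by
          rw [hN (m + 1) z, hUrec, h1z, mul_pow]
          congr 1
          rw [mul_comm ((U m z) ^ p), mul_div_mul_right _ _ hUp]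
        -- power arithmetic
        have hpowsucc : ‖z‖ ^ (2 ^ (m + 1)) = (‖z‖ ^ (2 ^ m)) ^ 2 := by
          rw [← pow_mul, pow_succ]
        refine ⟨hU1ne, ?_, fun _ => ?_⟩
        all_goals {
          rcases eq_or_ne (N m z) 0 with h0 | h0
          · rw [hNrec, h0]
            simp only [zero_div, sub_zero, one_pow, div_one, sub_self, norm_zero]
            first
              | exact le_of_lt (pow_pos hzpos _)
              | exact pow_pos hzpos _
          · have hcore := core p hp (N m z) hNnorm1 h0 hNne1
            rw [← hNrec] at hcore
            have hsq : ‖N m z‖ ^ 2 ≤ (‖z‖ ^ (2 ^ m)) ^ 2 :=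
              pow_le_pow_left₀ (norm_nonneg _) hNle 2
            rw [hpowsucc]
            first
              | exact le_of_lt (lt_of_lt_of_le hcore hsq)
              | exact lt_of_lt_of_le hcore hsq
        }
  exact ⟨(inv k).2.2 hk, fun j _ => (inv j).1⟩
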